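/- arXiv:1503.04562 — 2 statements merged into one kernel-verified Lean document; each statement's English description precedes it below -/
import Mathlib

section
/- Let n be an integer with 10 ≤ n ≤ 15 and let G = 2^+.S_n (the presented group with α = 0). Then G has no maximal Klein-four subgroups; that is, every subgroup of G isomorphic to C2 × C2 is properly contained in a strictly larger elementary abelian 2-subgroup of G. -/
/-! Double covers `2^α.S_n` of the symmetric groups, via the presentation with
generators `z, t_1, …, t_{n-1}` and relations `z² = 1`, `t_j² = z^α`,
`(t_j t_{j+1})³ = z^α`, `[z, t_j] = 1`, and `t_j t_k = z t_k t_j` for `|j - k| > 1`.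
Here `α = 0` gives `2^+.S_n` and `α = 1` gives `2^-.S_n`. -/

namespace DoubleCover

/-- Generators: `Sum.inl ()` is `z`; `Sum.inr j` is `t_{j+1}` for `j : Fin (n - 1)`. -/
abbrev Gen (n : ℕ) := Unit ⊕ Fin (n - 1)

/-- The word `z` in the free group on the generators. -/
def zw (n : ℕ) : FreeGroup (Gen n) := FreeGroup.of (Sum.inl ())

/-- The word `t_{j+1}` in the free group on the generators. -/
def tw (n : ℕ) (j : Fin (n - 1)) : FreeGroup (Gen n) := FreeGroup.of (Sum.inr j)

/-- The relations of the presentation of `2^α.S_n`. -/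
def rels (n α : ℕ) : Set (FreeGroup (Gen n)) :=
  {r | r = zw n ^ 2
    ∨ (∃ j, r = tw n j ^ 2 * (zw n ^ α)⁻¹)
    ∨ (∃ j k : Fin (n - 1), (j : ℕ) + 1 = (k : ℕ) ∧
        r = (tw n j * tw n k) ^ 3 * (zw n ^ α)⁻¹)
    ∨ (∃ j, r = zw n * tw n j * (zw n)⁻¹ * (tw n j)⁻¹)
    ∨ (∃ j k : Fin (n - 1), 1 < Nat.dist (j : ℕ) (k : ℕ) ∧
        r = tw n j * tw n k * (zw n * tw n k * tw n j)⁻¹)}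

/-- The double cover `2^α.S_n` of the symmetric group `S_n`. -/
abbrev Cover (n α : ℕ) := PresentedGroup (rels n α)

/-- The central element `z` of `2^α.S_n`. -/
def z (n α : ℕ) : Cover n α := PresentedGroup.of (Sum.inl ())

/-- The generator `t_{j+1}` of `2^α.S_n`, lifting the transposition `(j+1, j+2)`. -/
def t (n α : ℕ) (j : Fin (n - 1)) : Cover n α := PresentedGroup.of (Sum.inr j)

end DoubleCover

namespace DoubleCover

variable {n m α : ℕ}

lemma mk_rel {r : FreeGroup (Gen n)} (h : r ∈ rels n α) :
    PresentedGroup.mk (rels n α) r = 1 :=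
  (QuotientGroup.eq_one_iff _).2 (Subgroup.subset_normalClosure h)

lemma mk_zw : PresentedGroup.mk (rels n α) (zw n) = z n α := rfl
lemma mk_tw (j) : PresentedGroup.mk (rels n α) (tw n j) = t n α j := rfl

lemma z_sq : z n α * z n α = 1 := by
  have := mk_rel (n := n) (α := α) (r := zw n ^ 2) (Or.inl rfl)
  simpa [pow_two, mk_zw] using this

lemma t_sq (j : Fin (n - 1)) : t n α j * t n α j = (z n α) ^ α := by
  have := mk_rel (n := n) (α := α) (r := tw n j ^ 2 * (zw n ^ α)⁻¹)
    (Or.inr (Or.inl ⟨j, rfl⟩))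
  simp only [map_mul, map_pow, map_inv, mk_zw, mk_tw] at this
  rw [mul_inv_eq_one] at this
  simpa [pow_two] using this

lemma braid (j k : Fin (n - 1)) (h : (j : ℕ) + 1 = (k : ℕ)) :
    (t n α j * t n α k) ^ 3 = (z n α) ^ α := by
  have := mk_rel (n := n) (α := α) (r := (tw n j * tw n k) ^ 3 * (zw n ^ α)⁻¹)
    (Or.inr (Or.inr (Or.inl ⟨j, k, h, rfl⟩)))
  simp only [map_mul, map_pow, map_inv, mk_zw, mk_tw] at this
  rwa [mul_inv_eq_one] at this

lemma z_comm_t (j : Fin (n - 1)) : z n α * t n α j = t n α j * z n α := by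
  have := mk_rel (n := n) (α := α) (r := zw n * tw n j * (zw n)⁻¹ * (tw n j)⁻¹)
    (Or.inr (Or.inr (Or.inr (Or.inl ⟨j, rfl⟩))))
  simp only [map_mul, map_inv, mk_zw, mk_tw] at this
  rw [mul_inv_eq_one, mul_inv_eq_iff_eq_mul] at this
  exact this

lemma t_anticomm {j k : Fin (n - 1)} (h : 1 < Nat.dist (j : ℕ) (k : ℕ)) :
    t n α j * t n α k = z n α * (t n α k * t n α j) := by
  have := mk_rel (n := n) (α := α) (r := tw n j * tw n k * (zw n * tw n k * tw n j)⁻¹)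
    (Or.inr (Or.inr (Or.inr (Or.inr ⟨j, k, h, rfl⟩))))
  simp only [map_mul, map_inv, mk_zw, mk_tw] at this
  rw [mul_inv_eq_one] at this
  rw [this, mul_assoc]

lemma z_central (g : Cover n α) : Commute (z n α) g := by
  have : ∀ g : Cover n α, g ∈ Subgroup.centralizer {z n α} := by
    intro g
    refine PresentedGroup.generated_by _ _ (fun j => ?_) g
    rcases j with _ | j
    · exact Subgroup.mem_centralizer_iff.2 (by rintro y rfl; rfl)
    · refine Subgroup.mem_centralizer_iff.2 ?_
      rintro y rfl
      exact z_comm_t j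
  exact Subgroup.mem_centralizer_iff.1 (this g) (z n α) rfl

lemma zpow_central (e : ℕ) (g : Cover n α) : Commute (z n α ^ e) g :=
  (z_central g).pow_left e

-- α = 0 versions
lemma t_sq0 (j : Fin (n-1)) : t n 0 j * t n 0 j = 1 := by simpa using t_sq (α := 0) j

lemma inv_eq_self {G : Type*} [Group G] {u : G} (h : u * u = 1) : u⁻¹ = u :=
  inv_eq_of_mul_eq_one_right h

lemma braid_aux {G : Type*} [Group G] {a b : G} (ha : a * a = 1) (hb : b * b = 1)
    (h3 : (a * b) ^ 3 = 1) : a * b * a = b * a * b := by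
  have key : (a * b * a) * (b * a * b) = 1 := by
    rw [pow_succ, pow_succ, pow_one] at h3
    calc (a * b * a) * (b * a * b) = a * b * (a * b) * (a * b) := by group
      _ = 1 := h3
  have h2 : (b * a * b) * (b * a * b) = 1 := by
    have : (b * a * b) * (b * a * b) = b * a * (b * b) * a * b := by group
    rw [this, hb]
    have : b * a * 1 * a * b = b * (a * a) * b := by group
    rw [this, ha]
    simpa using hb
  calc a * b * a = (b * a * b)⁻¹ := eq_inv_of_mul_eq_one_left key
    _ = b * a * b := inv_eq_self h2

lemma t_braid0 (j k : Fin (n-1)) (h : (j : ℕ) + 1 = (k : ℕ)) :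
    t n 0 j * t n 0 k * t n 0 j = t n 0 k * t n 0 j * t n 0 k :=
  braid_aux (t_sq0 j) (t_sq0 k) (by simpa using braid (α := 0) j k h)

/-- The inclusion `Cover n α →* Cover m α` for `n ≤ m`. -/
def genMap (n m α : ℕ) (h : n ≤ m) : Gen n → Cover m α
  | Sum.inl _ => z m α
  | Sum.inr j => t m α (Fin.castLE (Nat.sub_le_sub_right h 1) j)

lemma genMap_rels (h : n ≤ m) : ∀ r ∈ rels n α, FreeGroup.lift (genMap n m α h) r = 1 := by
  rintro r (rfl | ⟨j, rfl⟩ | ⟨j, k, hjk, rfl⟩ | ⟨j, rfl⟩ | ⟨j, k, hd, rfl⟩) <;>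
      simp only [map_mul, map_pow, map_inv, zw, tw, FreeGroup.lift_apply_of, genMap]
  · rw [pow_two]; exact z_sq
  · rw [mul_inv_eq_one, pow_two]; exact t_sq _
  · rw [mul_inv_eq_one]; exact braid _ _ (by simpa using hjk)
  · rw [z_comm_t]; group
  · rw [mul_inv_eq_one]; rw [t_anticomm (by simpa using hd), mul_assoc]

def incl (n m α : ℕ) (h : n ≤ m) : Cover n α →* Cover m α :=
  PresentedGroup.toGroup (genMap_rels h)

@[simp] lemma incl_z (h : n ≤ m) : incl n m α h (z n α) = z m α := by
  exact PresentedGroup.toGroup.of (genMap_rels h)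

@[simp] lemma incl_t (h : n ≤ m) (j : Fin (n-1)) :
    incl n m α h (t n α j) = t m α (Fin.castLE (Nat.sub_le_sub_right h 1) j) := by
  exact PresentedGroup.toGroup.of (genMap_rels h)


/-! ### Coset enumeration: `Nat.card (Cover n 0) ≤ 2 * n!` -/

/-- `t_a` in `Cover (n+1) 0`, as a function of a natural number (`1` out of range). -/
def T (n a : ℕ) : Cover (n+1) 0 := if h : a < n then t (n+1) 0 ⟨a, h⟩ else 1

lemma T_sq (a : ℕ) : T n a * T n a = 1 := by
  unfold T; split
  · exact t_sq0 _
  · simp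

lemma T_braid {a : ℕ} (h : a + 1 < n) :
    T n a * T n (a+1) * T n a = T n (a+1) * T n a * T n (a+1) := by
  unfold T
  rw [dif_pos (by omega : a < n), dif_pos h]
  exact t_braid0 _ _ rfl

lemma T_comm {a b : ℕ} (hd : 1 < Nat.dist a b) (ha : a < n) (hb : b < n) :
    T n a * T n b = z (n+1) 0 * (T n b * T n a) := by
  unfold T
  rw [dif_pos ha, dif_pos hb]
  exact t_anticomm hd

/-- Descending words `t_{n-1} t_{n-2} ⋯ t_{n-m}`: coset representatives. -/
def dw (n : ℕ) : ℕ → Cover (n+1) 0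
  | 0 => 1
  | m+1 => dw n m * T n (n-1-m)

lemma z_comm_g (g : Cover (n+1) 0) : g * z (n+1) 0 = z (n+1) 0 * g :=
  (z_central g).symm.eq

lemma dw_comm : ∀ m {a : ℕ}, a + 1 < n - m →
    dw n m * T n a = z (n+1) 0 ^ m * (T n a * dw n m) := by
  intro m
  induction m with
  | zero => intro a _; simp [dw]
  | succ m ih =>
    intro a h
    have hd : 1 < Nat.dist (n-1-m) a := by simp [Nat.dist]; omega
    have h' : a + 1 < n - m := by omega
    calc dw n (m+1) * T n a = dw n m * (T n (n-1-m) * T n a) := by rw [dw]; group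
      _ = dw n m * (z (n+1) 0 * (T n a * T n (n-1-m))) := by
            rw [T_comm hd (by omega) (by omega)]
      _ = z (n+1) 0 * (dw n m * T n a * T n (n-1-m)) := by
            rw [← mul_assoc, z_comm_g]; group
      _ = z (n+1) 0 * (z (n+1) 0 ^ m * (T n a * dw n m) * T n (n-1-m)) := by
            rw [ih h']
      _ = z (n+1) 0 ^ (m+1) * (T n a * dw n (m+1)) := by rw [pow_succ', dw]; group

lemma dw_slide : ∀ m, m ≤ n → ∀ {a : ℕ}, n - m + 1 ≤ a → a < n →
    ∃ e : ℕ, dw n m * T n a = z (n+1) 0 ^ e * (T n (a-1) * dw n m) := by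
  intro m
  induction m with
  | zero => intro _ a h1 h2; omega
  | succ m ih =>
    intro hm a h1 h2
    rcases Nat.lt_or_ge (n - m) a with hc | hc
    · -- a ≥ n - m + 1 : slide past the new factor
      have hd : 1 < Nat.dist (n-1-m) a := by simp [Nat.dist]; omega
      obtain ⟨e, he⟩ := ih (by omega) (by omega) h2
      refine ⟨e + 1, ?_⟩
      calc dw n (m+1) * T n a = dw n m * (T n (n-1-m) * T n a) := by rw [dw]; group
        _ = dw n m * (z (n+1) 0 * (T n a * T n (n-1-m))) := by
              rw [T_comm hd (by omega) h2]
        _ = z (n+1) 0 * (dw n m * T n a * T n (n-1-m)) := by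
              rw [← mul_assoc, z_comm_g]; group
        _ = z (n+1) 0 * (z (n+1) 0 ^ e * (T n (a-1) * dw n m) * T n (n-1-m)) := by
              rw [he]
        _ = z (n+1) 0 ^ (e+1) * (T n (a-1) * dw n (m+1)) := by rw [pow_succ', dw]; group
    · -- a = n - m ; use the braid relation
      have ha : a = n - m := by omega
      have hm1 : 1 ≤ m := by omega
      obtain ⟨m', rfl⟩ : ∃ m'', m = m'' + 1 := ⟨m - 1, by omega⟩
      obtain ⟨c, rfl⟩ : ∃ c, a = c + 1 := ⟨a - 1, by omega⟩
      have hidx1 : n - 1 - m' = c + 1 := by omega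
      have hidx2 : n - 1 - (m'+1) = c := by omega
      refine ⟨m', ?_⟩
      have hbr : T n (c+1) * T n c * T n (c+1) = T n c * T n (c+1) * T n c :=
        (T_braid (by omega)).symm
      have hcm : dw n m' * T n c = z (n+1) 0 ^ m' * (T n c * dw n m') :=
        dw_comm m' (by omega)
      calc dw n (m'+2) * T n (c+1)
          = dw n m' * (T n (c+1) * T n c * T n (c+1)) := by
            rw [dw, dw, hidx1, hidx2]; group
        _ = dw n m' * (T n c * T n (c+1) * T n c) := by rw [hbr]
        _ = (dw n m' * T n c) * (T n (c+1) * T n c) := by group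
        _ = z (n+1) 0 ^ m' * (T n c * dw n m') * (T n (c+1) * T n c) := by rw [hcm]
        _ = z (n+1) 0 ^ m' * (T n ((c+1)-1) * dw n (m'+2)) := by
            rw [dw, dw, hidx1, hidx2]; simp only [Nat.add_sub_cancel]; group

lemma dw_mul_t {m : ℕ} (hm : m ≤ n) {a : ℕ} (ha : a < n) :
    ∃ (v : Cover n 0) (m' : ℕ), m' ≤ n ∧
      dw n m * T n a = incl n (n+1) 0 (Nat.le_succ n) v * dw n m' := by
  have hzi : incl n (n+1) 0 (Nat.le_succ n) (z n 0) = z (n+1) 0 := incl_z _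
  rcases Nat.lt_or_ge (a + 1) (n - m) with h1 | h1
  · -- commute past the whole word
    have hT : incl n (n+1) 0 (Nat.le_succ n) (t n 0 ⟨a, by omega⟩) = T n a := by
      rw [incl_t, T, dif_pos ha]; rfl
    refine ⟨(z n 0) ^ m * t n 0 ⟨a, by omega⟩, m, hm, ?_⟩
    rw [dw_comm m h1, map_mul, map_pow, hzi, hT]
    group
  rcases Nat.lt_or_ge a (n - m) with h2 | h2
  · -- a = n - m - 1 : extend the word
    have hee : n - 1 - m = a := by omega
    refine ⟨1, m + 1, by omega, ?_⟩
    rw [map_one, one_mul, dw, hee]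
  rcases Nat.eq_or_lt_of_le h2 with h3 | h3
  · -- a = n - m : shorten the word
    obtain ⟨m'', rfl⟩ : ∃ m'', m = m'' + 1 := ⟨m - 1, by omega⟩
    have hee : n - 1 - m'' = a := by omega
    refine ⟨1, m'', by omega, ?_⟩
    rw [map_one, one_mul, dw, hee, mul_assoc, T_sq, mul_one]
  · -- a > n - m : slide
    obtain ⟨e, he⟩ := dw_slide m hm (by omega) ha
    have hT : incl n (n+1) 0 (Nat.le_succ n) (t n 0 ⟨a - 1, by omega⟩) = T n (a-1) := by
      rw [incl_t, T, dif_pos (by omega : a - 1 < n)]; rfl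
    refine ⟨(z n 0) ^ e * t n 0 ⟨a - 1, by omega⟩, m, hm, ?_⟩
    rw [he, map_mul, map_pow, hzi, hT]
    group

lemma exists_rep (g : Cover (n+1) 0) :
    ∃ (u : Cover n 0) (m : ℕ), m ≤ n ∧
      incl n (n+1) 0 (Nat.le_succ n) u * dw n m = g := by
  set ι := incl n (n+1) 0 (Nat.le_succ n) with hι
  have key : ∀ g : Cover (n+1) 0,
      (∀ (u : Cover n 0) (m : ℕ), m ≤ n → ∃ u' m', m' ≤ n ∧
        ι u * dw n m * g = ι u' * dw n m') ∧
      (∀ (u : Cover n 0) (m : ℕ), m ≤ n → ∃ u' m', m' ≤ n ∧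
        ι u * dw n m * g⁻¹ = ι u' * dw n m') := by
    intro g
    have hmem : g ∈ Subgroup.closure
        (Set.range (PresentedGroup.of : Gen (n+1) → Cover (n+1) 0)) := by
      rw [PresentedGroup.closure_range_of]; trivial
    induction hmem using Subgroup.closure_induction with
    | mem x hx =>
      obtain ⟨j, rfl⟩ := hx
      have main : ∀ (u : Cover n 0) (m : ℕ), m ≤ n → ∃ u' m', m' ≤ n ∧
          ι u * dw n m * PresentedGroup.of j = ι u' * dw n m' := by
        intro u m hm
        rcases j with _ | j
        · -- z
          refine ⟨u * z n 0, m, hm, ?_⟩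
          have : (PresentedGroup.of (Sum.inl ()) : Cover (n+1) 0) = z (n+1) 0 := rfl
          rw [this, mul_assoc, z_comm_g, map_mul, incl_z]
          group
        · -- t j
          have hj : (j : ℕ) < n := j.isLt
          have : (PresentedGroup.of (Sum.inr j) : Cover (n+1) 0) = T n (j : ℕ) := by
            rw [T, dif_pos hj]; congr 1
          rw [this]
          obtain ⟨v, m', hm', hv⟩ := dw_mul_t hm hj
          exact ⟨u * v, m', hm', by rw [mul_assoc, hv, map_mul, ← hι]; group⟩
      constructor
      · exact main
      · -- inverses of generators are themselves
        have hinv : (PresentedGroup.of j)⁻¹ = (PresentedGroup.of j : Cover (n+1) 0) := by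
          rcases j with _ | j
          · exact inv_eq_self (z_sq (n := n+1) (α := 0))
          · exact inv_eq_self (t_sq0 j)
        rw [hinv]; exact main
    | one => constructor <;> (intro u m hm; exact ⟨u, m, hm, by simp⟩)
    | mul x y _ _ hx hy =>
      constructor
      · intro u m hm
        obtain ⟨u', m', hm', h1⟩ := hx.1 u m hm
        obtain ⟨u'', m'', hm'', h2⟩ := hy.1 u' m' hm'
        exact ⟨u'', m'', hm'', by rw [← mul_assoc, h1, h2]⟩
      · intro u m hm
        rw [mul_inv_rev]
        obtain ⟨u', m', hm', h1⟩ := hy.2 u m hm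
        obtain ⟨u'', m'', hm'', h2⟩ := hx.2 u' m' hm'
        exact ⟨u'', m'', hm'', by rw [← mul_assoc, h1, h2]⟩
    | inv x _ hx =>
      exact ⟨hx.2, by simpa using hx.1⟩
  obtain ⟨u', m', hm', h⟩ := (key g).1 1 0 (by omega)
  refine ⟨u', m', hm', ?_⟩
  rw [← h]
  simp [dw]

theorem cover_finite_and_card (n : ℕ) :
    Finite (Cover n 0) ∧ Nat.card (Cover n 0) ≤ 2 * n.factorial := by
  induction n with
  | zero =>
    have htop : ∀ g : Cover 0 0, g ∈ Subgroup.zpowers (z 0 0) := by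
      intro g
      refine PresentedGroup.generated_by _ _ (fun j => ?_) g
      rcases j with _ | j
      · exact Subgroup.mem_zpowers _
      · exact j.elim0
    have hzsq : (z 0 0) ^ 2 = 1 := by rw [pow_two]; exact z_sq
    have hfo : IsOfFinOrder (z 0 0) :=
      isOfFinOrder_iff_pow_eq_one.2 ⟨2, by norm_num, hzsq⟩
    have hfin : (Subgroup.zpowers (z 0 0) : Set (Cover 0 0)).Finite :=
      finite_zpowers.2 hfo
    have huniv : (Subgroup.zpowers (z 0 0) : Set (Cover 0 0)) = Set.univ :=
      Set.eq_univ_of_forall htop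
    have hfin' : Finite (Cover 0 0) := by
      rw [huniv] at hfin
      exact Set.finite_univ_iff.1 hfin
    refine ⟨hfin', ?_⟩
    have h1 : Nat.card (Cover 0 0) = Nat.card (Subgroup.zpowers (z 0 0)) := by
      apply Nat.card_congr
      exact (Equiv.Set.univ _).symm.trans (Equiv.setCongr huniv.symm)
    rw [h1, Nat.card_zpowers]
    have : orderOf (z 0 0) ∣ 2 := orderOf_dvd_of_pow_eq_one hzsq
    calc orderOf (z 0 0) ≤ 2 := Nat.le_of_dvd (by norm_num) this
      _ = 2 * Nat.factorial 0 := by norm_num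
  | succ n ih =>
    obtain ⟨hfin, hcard⟩ := ih
    haveI := hfin
    set F : Cover n 0 × Fin (n+1) → Cover (n+1) 0 :=
      fun p => incl n (n+1) 0 (Nat.le_succ n) p.1 * dw n (p.2 : ℕ) with hF
    have hFsurj : Function.Surjective F := by
      intro g
      obtain ⟨u, m, hm, he⟩ := exists_rep g
      exact ⟨(u, ⟨m, by omega⟩), he⟩
    have hfin' : Finite (Cover (n+1) 0) := Finite.of_surjective F hFsurj
    refine ⟨hfin', ?_⟩
    calc Nat.card (Cover (n+1) 0) ≤ Nat.card (Cover n 0 × Fin (n+1)) :=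
          Nat.card_le_card_of_surjective F hFsurj
      _ = Nat.card (Cover n 0) * (n+1) := by simp [Nat.card_prod]
      _ ≤ 2 * n.factorial * (n+1) := Nat.mul_le_mul_right _ hcard
      _ = 2 * (n+1).factorial := by rw [Nat.factorial_succ]; ring


/-! ### The projection to the symmetric group -/

lemma swap_cube {β : Type*} [DecidableEq β] {a b c : β}
    (hab : a ≠ b) (hbc : b ≠ c) (hac : a ≠ c) :
    (Equiv.swap a b * Equiv.swap b c) ^ 3 = 1 := by
  set f := Equiv.swap a b * Equiv.swap b c with hf
  have hfa : f a = b := by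
    rw [hf, Equiv.Perm.mul_apply, Equiv.swap_apply_of_ne_of_ne hab hac,
      Equiv.swap_apply_left]
  have hfb : f b = c := by
    rw [hf, Equiv.Perm.mul_apply, Equiv.swap_apply_left,
      Equiv.swap_apply_of_ne_of_ne hac.symm hbc.symm]
  have hfc : f c = a := by
    rw [hf, Equiv.Perm.mul_apply, Equiv.swap_apply_right, Equiv.swap_apply_right]
  have hother : ∀ x, x ≠ a → x ≠ b → x ≠ c → f x = x := by
    intro x hxa hxb hxc
    rw [hf, Equiv.Perm.mul_apply, Equiv.swap_apply_of_ne_of_ne hxb hxc,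
      Equiv.swap_apply_of_ne_of_ne hxa hxb]
  ext x
  have h3 : (f ^ 3) x = f (f (f x)) := by
    rw [pow_succ, pow_succ, pow_one]; simp [Equiv.Perm.mul_apply]
  rw [h3]
  by_cases hxa : x = a
  · subst hxa; rw [hfa, hfb, hfc]; simp
  by_cases hxb : x = b
  · subst hxb; rw [hfb, hfc, hfa]; simp
  by_cases hxc : x = c
  · subst hxc; rw [hfc, hfa, hfb]; simp
  · rw [hother x hxa hxb hxc, hother x hxa hxb hxc, hother x hxa hxb hxc]; simp

lemma swap_disj_comm {β : Type*} [DecidableEq β] {a b c d : β}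
    (hca : c ≠ a) (hcb : c ≠ b) (hda : d ≠ a) (hdb : d ≠ b) :
    Equiv.swap a b * Equiv.swap c d = Equiv.swap c d * Equiv.swap a b := by
  ext x
  simp only [Equiv.Perm.mul_apply, Equiv.swap_apply_def]
  split_ifs <;> simp_all

/-- The images of the generators in `S_n`. -/
def permGenMap (n : ℕ) : Gen n → Equiv.Perm (Fin n)
  | Sum.inl _ => 1
  | Sum.inr j => Equiv.swap ⟨(j : ℕ), by have := j.isLt; omega⟩
      ⟨(j : ℕ) + 1, by have := j.isLt; omega⟩

lemma permGenMap_rels : ∀ r ∈ rels n 0, FreeGroup.lift (permGenMap n) r = 1 := by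
  rintro r (rfl | ⟨j, rfl⟩ | ⟨j, k, hjk, rfl⟩ | ⟨j, rfl⟩ | ⟨j, k, hd, rfl⟩) <;>
      simp only [map_mul, map_pow, map_inv, zw, tw, FreeGroup.lift_apply_of, permGenMap]
  · simp
  · simp [pow_two]
  · rcases j with ⟨jv, hjv⟩
    rcases k with ⟨kv, hkv⟩
    simp only at hjk
    subst hjk
    rw [pow_zero, inv_one, mul_one]
    convert swap_cube (a := (⟨jv, by omega⟩ : Fin n)) (b := ⟨jv + 1, by omega⟩)
      (c := ⟨jv + 1 + 1, by omega⟩) ?_ ?_ ?_ using 3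
    · simp only [ne_eq, Fin.mk.injEq]; omega
    · simp only [ne_eq, Fin.mk.injEq]; omega
    · simp only [ne_eq, Fin.mk.injEq]; omega
  · simp
  · rcases j with ⟨jv, hjv⟩
    rcases k with ⟨kv, hkv⟩
    simp only [Nat.dist] at hd
    rw [mul_inv_eq_one, one_mul]
    exact swap_disj_comm (by simp [Fin.ext_iff]; omega) (by simp [Fin.ext_iff]; omega)
      (by simp [Fin.ext_iff]; omega) (by simp [Fin.ext_iff]; omega)

/-- The projection `2^+.S_n → S_n`. -/
def pi (n : ℕ) : Cover n 0 →* Equiv.Perm (Fin n) :=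
  PresentedGroup.toGroup permGenMap_rels

@[simp] lemma pi_z : pi n (z n 0) = 1 :=
  PresentedGroup.toGroup.of permGenMap_rels

@[simp] lemma pi_t (j : Fin (n - 1)) :
    pi n (t n 0 j) = Equiv.swap ⟨(j : ℕ), by have := j.isLt; omega⟩
      ⟨(j : ℕ) + 1, by have := j.isLt; omega⟩ :=
  PresentedGroup.toGroup.of permGenMap_rels

lemma swap_mem_range (i j : Fin n) : Equiv.swap i j ∈ (pi n).range := by
  -- reduce to the case `i < j`, then induct on the gap
  have main : ∀ (g : ℕ) (i j : Fin n), (j : ℕ) = (i : ℕ) + g + 1 →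
      Equiv.swap i j ∈ (pi n).range := by
    intro g
    induction g with
    | zero =>
      intro i j hij
      refine ⟨t n 0 ⟨(i : ℕ), by have := j.isLt; omega⟩, ?_⟩
      rw [pi_t]
      congr 1 <;> simp [Fin.ext_iff, hij]
    | succ g ih =>
      intro i j hij
      have hjlt : (j : ℕ) < n := j.isLt
      have hm : (i : ℕ) + g + 1 < n := by omega
      set m : Fin n := ⟨(i : ℕ) + g + 1, hm⟩ with hmdef
      have hmv : (m : ℕ) = (i : ℕ) + g + 1 := rfl
      have h1 : Equiv.swap i m ∈ (pi n).range := ih i m rfl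
      have hmlt : (m : ℕ) < n - 1 := by omega
      have h2 : Equiv.swap m j ∈ (pi n).range := by
        refine ⟨t n 0 ⟨(m : ℕ), hmlt⟩, ?_⟩
        rw [pi_t]
        congr 1 <;> (simp only [Fin.ext_iff, hmv]; omega)
      have key : Equiv.swap m j * Equiv.swap i m * Equiv.swap m j = Equiv.swap j i :=
        Equiv.swap_mul_swap_mul_swap (x := i) (y := m) (z := j)
          (by simp only [ne_eq, Fin.ext_iff, hmv]; omega)
          (by simp only [ne_eq, Fin.ext_iff]; omega)
      have : Equiv.swap j i ∈ (pi n).range := by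
        rw [← key]; exact mul_mem (mul_mem h2 h1) h2
      rwa [Equiv.swap_comm]
  rcases Nat.lt_trichotomy (i : ℕ) (j : ℕ) with h | h | h
  · exact main ((j : ℕ) - (i : ℕ) - 1) i j (by omega)
  · have : i = j := Fin.ext h
    subst this
    simp only [Equiv.swap_self]
    exact ⟨1, by simp [Equiv.Perm.one_def]⟩
  · rw [Equiv.swap_comm]
    exact main ((i : ℕ) - (j : ℕ) - 1) j i (by omega)

lemma pi_surjective : Function.Surjective (pi n) := by
  intro f
  exact Equiv.Perm.swap_induction_on f (one_mem (pi n).range)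
    (fun f x y _ ih => mul_mem (swap_mem_range x y) ih)

theorem ker_pi (n : ℕ) (hz : orderOf (z n 0) = 2) :
    (pi n).ker = Subgroup.zpowers (z n 0) := by
  haveI : Finite (Cover n 0) := (cover_finite_and_card n).1
  have hle : Subgroup.zpowers (z n 0) ≤ (pi n).ker :=
    Subgroup.zpowers_le.2 (by simp [MonoidHom.mem_ker])
  have hindex : (pi n).ker.index = n.factorial := by
    rw [Subgroup.index_ker, MonoidHom.range_eq_top_of_surjective _ pi_surjective,
      Subgroup.card_top, Nat.card_eq_fintype_card, Fintype.card_perm, Fintype.card_fin]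
  have hcard : Nat.card (pi n).ker * n.factorial ≤ 2 * n.factorial := by
    have heq : Nat.card (pi n).ker * n.factorial = Nat.card (Cover n 0) := by
      rw [← hindex]; exact (pi n).ker.card_mul_index
    rw [heq]; exact (cover_finite_and_card n).2
  have hker_le : Nat.card (pi n).ker ≤ 2 := by
    have := n.factorial_pos
    exact Nat.le_of_mul_le_mul_right (by omega) this
  have hzcard : Nat.card (Subgroup.zpowers (z n 0)) = 2 := by
    rw [Nat.card_zpowers, hz]
  exact ((Subgroup.eq_of_le_of_card_ge hle (by omega)).symm)


/-! ### Words lifting products of disjoint transpositions -/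

/-- `t_a : Cover n 0` as function of `a : ℕ` (`1` if out of range). -/
def TT (n a : ℕ) : Cover n 0 := if h : a < n - 1 then t n 0 ⟨a, h⟩ else 1

lemma TT_sq (a : ℕ) : TT n a * TT n a = 1 := by
  unfold TT; split
  · exact t_sq0 _
  · simp

lemma TT_comm {a b : ℕ} (hd : 1 < Nat.dist a b) (ha : a < n - 1) (hb : b < n - 1) :
    TT n a * TT n b = z n 0 * (TT n b * TT n a) := by
  unfold TT; rw [dif_pos ha, dif_pos hb]; exact t_anticomm hd

lemma z_comm_g' (g : Cover n α) : g * z n α = z n α * g := (z_central g).symm.eq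

lemma z_sq' : z n α ^ 2 = 1 := by rw [pow_two]; exact z_sq

lemma z_pow_mul2 (k : ℕ) : z n α ^ (2*k) = 1 := by rw [pow_mul, z_sq', one_pow]

/-- `w₀ = t_c t_{c+2} ⋯ t_{c+2k-2}`, a lift of `k` disjoint transpositions. -/
def Wo (n c : ℕ) : ℕ → Cover n 0
  | 0 => 1
  | k+1 => Wo n c k * TT n (c + 2*k)

lemma Wo_zero (c : ℕ) : Wo n c 0 = 1 := rfl
lemma Wo_succ (c k : ℕ) : Wo n c (k+1) = Wo n c k * TT n (c + 2*k) := rfl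

lemma Wo_comm {c k a : ℕ} (hk : c + 2*k ≤ n) (ha : a < n - 1)
    (hda : ∀ i < k, 1 < Nat.dist (c + 2*i) a) :
    Wo n c k * TT n a = z n 0 ^ k * (TT n a * Wo n c k) := by
  induction k with
  | zero => simp [Wo_zero]
  | succ k ih =>
    have h2k : c + 2*k < n - 1 := by omega
    calc Wo n c (k+1) * TT n a = Wo n c k * (TT n (c + 2*k) * TT n a) := by
          rw [Wo_succ]; group
      _ = Wo n c k * (z n 0 * (TT n a * TT n (c + 2*k))) := by
          rw [TT_comm (hda k (by omega)) h2k ha]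
      _ = z n 0 * (Wo n c k * TT n a * TT n (c + 2*k)) := by
          rw [← mul_assoc, z_comm_g']; group
      _ = z n 0 * (z n 0 ^ k * (TT n a * Wo n c k) * TT n (c + 2*k)) := by
          rw [ih (by omega) (fun i hi => hda i (by omega))]
      _ = z n 0 ^ (k+1) * (TT n a * Wo n c (k+1)) := by rw [pow_succ', Wo_succ]; group

lemma Wo_sq {c k : ℕ} (hk : c + 2*k ≤ n) : Wo n c k * Wo n c k = z n 0 ^ (k.choose 2) := by
  induction k with
  | zero => simp [Wo_zero]
  | succ k ih =>
    have hcomm : Wo n c k * TT n (c + 2*k) = z n 0 ^ k * (TT n (c + 2*k) * Wo n c k) :=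
      Wo_comm (by omega) (by omega) (fun i hi => by simp [Nat.dist]; omega)
    have hcomm' : TT n (c + 2*k) * Wo n c k = z n 0 ^ k * (Wo n c k * TT n (c + 2*k)) := by
      rw [hcomm, ← mul_assoc, ← pow_add, ← two_mul, z_pow_mul2, one_mul]
    have hch : (k+1).choose 2 = k.choose 2 + k := by
      rw [Nat.choose_succ_succ, Nat.choose_one_right, add_comm]
    calc Wo n c (k+1) * Wo n c (k+1)
        = Wo n c k * (TT n (c + 2*k) * Wo n c k) * TT n (c + 2*k) := by rw [Wo_succ]; group
      _ = Wo n c k * (z n 0 ^ k * (Wo n c k * TT n (c + 2*k))) * TT n (c + 2*k) := by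
          rw [hcomm']
      _ = z n 0 ^ k * ((Wo n c k * Wo n c k) * (TT n (c + 2*k) * TT n (c + 2*k))) := by
          rw [← mul_assoc (Wo n c k) (z n 0 ^ k), (zpow_central k (Wo n c k)).symm.eq]
          group
      _ = z n 0 ^ k * (z n 0 ^ (k.choose 2) * 1) := by rw [ih (by omega), TT_sq]
      _ = z n 0 ^ ((k+1).choose 2) := by
          rw [mul_one, hch, pow_add]; exact pow_mul_comm _ _ _

lemma Wo_split (c k m : ℕ) : Wo n c (k + m) = Wo n c k * Wo n (c + 2*k) m := by
  induction m with
  | zero => simp [Wo_zero]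
  | succ m ih =>
    have harith : c + 2*(k+m) = (c + 2*k) + 2*m := by ring
    rw [show k + (m+1) = (k+m)+1 from rfl, Wo_succ, ih, Wo_succ, harith, mul_assoc]

/-! ### Permutation side -/

/-- The transposition `(a, a+1)` in `S_n` (or `1` if out of range). -/
def SW (n a : ℕ) : Equiv.Perm (Fin n) :=
  if h : a + 1 < n then Equiv.swap ⟨a, by omega⟩ ⟨a+1, h⟩ else 1

lemma pi_TT (a : ℕ) : pi n (TT n a) = SW n a := by
  unfold TT SW
  by_cases h : a < n - 1
  · rw [dif_pos h, dif_pos (by omega), pi_t]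
  · rw [dif_neg h, dif_neg (by omega), map_one]

lemma SW_self {a : ℕ} (h : a + 1 < n) : SW n a ⟨a, by omega⟩ = ⟨a+1, h⟩ := by
  rw [SW, dif_pos h]; exact Equiv.swap_apply_left _ _

lemma SW_fix {a : ℕ} (x : Fin n) (h1 : (x : ℕ) ≠ a) (h2 : (x : ℕ) ≠ a + 1) :
    SW n a x = x := by
  rw [SW]; split
  · exact Equiv.swap_apply_of_ne_of_ne (by simp [Fin.ext_iff]; omega)
      (by simp [Fin.ext_iff]; omega)
  · rfl

/-- `(0 1)(2 3)⋯(2k-2, 2k-1)` in `S_n`. -/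
def P0 (n : ℕ) : ℕ → Equiv.Perm (Fin n)
  | 0 => 1
  | k+1 => P0 n k * SW n (2*k)

lemma pi_Wo0 (k : ℕ) : pi n (Wo n 0 k) = P0 n k := by
  induction k with
  | zero => simp [Wo_zero, P0]
  | succ k ih =>
    rw [Wo_succ, map_mul, ih, pi_TT, show (0 + 2*k) = 2*k by omega]
    rfl

lemma P0_fix {k : ℕ} (x : Fin n) (hx : 2*k ≤ (x : ℕ)) : P0 n k x = x := by
  induction k with
  | zero => rfl
  | succ k ih =>
    show (P0 n k * SW n (2*k)) x = x
    rw [Equiv.Perm.mul_apply, SW_fix x (by omega) (by omega), ih (by omega)]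

lemma P0_cycleType {k : ℕ} (hk : 2*k ≤ n) :
    (P0 n k).cycleType = Multiset.replicate k 2 := by
  induction k with
  | zero => simp [P0]
  | succ k ih =>
    have h2k1 : 2*k + 1 < n := by omega
    have hxy : (⟨2*k, by omega⟩ : Fin n) ≠ ⟨2*k+1, h2k1⟩ := by simp [Fin.ext_iff]
    have hSW : SW n (2*k) = Equiv.swap ⟨2*k, by omega⟩ ⟨2*k+1, h2k1⟩ := dif_pos h2k1
    have hdisj : (P0 n k).Disjoint (SW n (2*k)) := by
      intro x
      by_cases hx : 2*k ≤ (x : ℕ)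
      · exact Or.inl (P0_fix x hx)
      · exact Or.inr (SW_fix x (by omega) (by omega))
    show ((P0 n k) * SW n (2*k)).cycleType = _
    rw [Equiv.Perm.Disjoint.cycleType_mul hdisj, ih (by omega), hSW,
      (Equiv.Perm.isCycle_swap hxy).cycleType, Equiv.Perm.card_support_swap hxy]
    rw [Multiset.replicate_succ, ← Multiset.singleton_add, add_comm]

lemma pi_Wo_fix {c k : ℕ} (x : Fin n) (hx : c + 2*k ≤ (x : ℕ)) :
    pi n (Wo n c k) x = x := by
  induction k with
  | zero => simp [Wo_zero]
  | succ k ih =>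
    rw [Wo_succ, map_mul, Equiv.Perm.mul_apply, pi_TT,
      SW_fix x (by omega) (by omega), ih (by omega)]

lemma pi_Wo_apply {c k i : ℕ} (hik : i < k) (hkn : c + 2*k ≤ n) :
    pi n (Wo n c k) ⟨c + 2*i, by omega⟩ = ⟨c + 2*i + 1, by omega⟩ := by
  induction k with
  | zero => omega
  | succ k ih =>
    rw [Wo_succ, map_mul, Equiv.Perm.mul_apply, pi_TT]
    rcases Nat.lt_or_ge i k with hik' | hik'
    · rw [SW_fix ⟨c + 2*i, by omega⟩ (by show c + 2*i ≠ c + 2*k; omega)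
        (by show c + 2*i ≠ c + 2*k + 1; omega)]
      exact ih hik' (by omega)
    · have hieq : i = k := by omega
      subst hieq
      rw [SW_self (by omega : c + 2*i + 1 < n)]
      exact pi_Wo_fix ⟨c + 2*i + 1, by omega⟩ (by show c + 2*i ≤ c + 2*i + 1; omega)

/-! ### Involutions in `S_n` -/

lemma invol_conj {σ : Equiv.Perm (Fin n)} (hσ1 : σ ≠ 1) (hσ2 : σ ^ 2 = 1) :
    ∃ (k : ℕ) (ρ : Equiv.Perm (Fin n)), 1 ≤ k ∧ 2*k ≤ n ∧ ρ * P0 n k * ρ⁻¹ = σ := by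
  have horder : orderOf σ ∣ 2 := orderOf_dvd_of_pow_eq_one hσ2
  have h2 : ∀ m ∈ σ.cycleType, m = 2 := by
    intro m hm
    have hge := Equiv.Perm.two_le_of_mem_cycleType hm
    have hdvd : m ∣ orderOf σ := by
      have := Multiset.dvd_lcm hm
      rwa [σ.lcm_cycleType] at this
    have : m ∣ 2 := hdvd.trans horder
    have := Nat.le_of_dvd (by norm_num) this
    omega
  set k := Multiset.card σ.cycleType with hkdef
  have hrep : σ.cycleType = Multiset.replicate k 2 := Multiset.eq_replicate.2 ⟨rfl, h2⟩
  have hk1 : 1 ≤ k := by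
    rcases Nat.eq_zero_or_pos k with h | h
    · exfalso
      apply hσ1
      rw [← Equiv.Perm.cycleType_eq_zero, ← Multiset.card_eq_zero, ← hkdef, h]
    · exact h
  have hsum : 2*k ≤ n := by
    have hs := σ.sum_cycleType
    rw [hrep, Multiset.sum_replicate, smul_eq_mul] at hs
    have hle : σ.support.card ≤ n := by
      have := Finset.card_le_univ σ.support
      simpa using this
    omega
  have hconj : IsConj (P0 n k) σ :=
    Equiv.Perm.isConj_iff_cycleType_eq.2 (by rw [P0_cycleType hsum, hrep])
  obtain ⟨ρ, hρ⟩ := isConj_iff.1 hconj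
  exact ⟨k, ρ, hk1, hsum, hρ⟩

lemma mem_zpowers_z {g : Cover n 0} (hg : g ∈ Subgroup.zpowers (z n 0)) :
    g = 1 ∨ g = z n 0 := by
  obtain ⟨m, rfl⟩ := hg
  change z n 0 ^ m = 1 ∨ z n 0 ^ m = z n 0
  have hz2 : (z n 0) ^ (2 : ℤ) = 1 := by
    rw [zpow_two]; exact z_sq
  rcases Int.even_or_odd m with ⟨c, hc⟩ | ⟨c, hc⟩
  · left
    rw [hc, show c + c = 2 * c by ring, zpow_mul, hz2, one_zpow]
  · right
    rw [hc, zpow_add, zpow_mul, hz2, one_zpow, zpow_one, one_mul]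

/-! ### Elementary abelian closures -/

lemma isElemAbelianTwo_closure {G : Type*} [Group G] (s : Set G)
    (hsq : ∀ a ∈ s, a ^ 2 = 1) (hcomm : ∀ a ∈ s, ∀ b ∈ s, Commute a b) :
    ∀ x ∈ Subgroup.closure s, x ^ 2 = 1 := by
  have step1 : ∀ g ∈ Subgroup.closure s, ∀ a ∈ s, Commute a g := by
    intro g hg
    induction hg using Subgroup.closure_induction with
    | mem x hx => exact fun a ha => hcomm a ha x hx
    | one => exact fun a _ => Commute.one_right a
    | mul x y _ _ ihx ihy => exact fun a ha => (ihx a ha).mul_right (ihy a ha)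
    | inv x _ ih => exact fun a ha => (ih a ha).inv_right
  have step2 : ∀ g ∈ Subgroup.closure s, ∀ h ∈ Subgroup.closure s, Commute g h := by
    intro g hg
    induction hg using Subgroup.closure_induction with
    | mem x hx => exact fun h hh => (step1 h hh x hx)
    | one => exact fun h _ => Commute.one_left h
    | mul x y _ _ ihx ihy => exact fun h hh => (ihx h hh).mul_left (ihy h hh)
    | inv x _ ih => exact fun h hh => (ih h hh).inv_left
  intro g hg
  induction hg using Subgroup.closure_induction with
  | mem x hx => exact hsq x hx
  | one => simp
  | mul x y hx hy ihx ihy =>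
    rw [(step2 x hx y hy).mul_pow, ihx, ihy, one_mul]
  | inv x _ ih => rw [inv_pow, ih, inv_one]


/-! ### Case `z ∈ H`: the main construction -/

lemma caseB_finish {n : ℕ} (hz : orderOf (z n 0) = 2)
    (H : Subgroup (Cover n 0)) (hsq : ∀ g ∈ H, g ^ 2 = 1) (hcard4 : Nat.card H = 4)
    (hzH : z n 0 ∈ H) {x : Cover n 0} (hxH : x ∈ H) (hx1 : x ≠ 1) (hxz : x ≠ z n 0)
    {w y : Cover n 0} (hxw : x = w ∨ x = z n 0 * w)
    (hysq : y * y = 1) (hcomm : w * y = y * w)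
    (hpiy1 : pi n y ≠ 1) (hpiyx : pi n y ≠ pi n x) :
    ∃ E : Subgroup (Cover n 0), (∀ g ∈ E, g ^ 2 = 1) ∧ H < E := by
  haveI : Finite (Cover n 0) := (cover_finite_and_card n).1
  have hz1 : z n 0 ≠ 1 := by
    intro h
    rw [h, orderOf_one] at hz
    omega
  have hx2 : x ^ 2 = 1 := hsq x hxH
  have hxyc : Commute x y := by
    rcases hxw with h | h
    · rw [h]; exact hcomm
    · rw [h]; exact Commute.mul_left (z_central y) hcomm
  -- H consists of exactly 1, z, x, z*x
  have hd1 : z n 0 * x ≠ x := by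
    intro h
    exact hz1 (mul_right_cancel (h.trans (one_mul x).symm))
  have hd2 : z n 0 * x ≠ z n 0 := by
    intro h
    exact hx1 (mul_left_cancel (h.trans (mul_one (z n 0)).symm))
  have hd3 : z n 0 * x ≠ 1 := by
    intro h
    apply hxz
    have h2 : x = (z n 0)⁻¹ := eq_inv_of_mul_eq_one_right h
    rw [h2, inv_eq_self (show z n 0 * z n 0 = 1 from z_sq)]
  have hHsub : ∀ g ∈ H, g = 1 ∨ g = z n 0 ∨ g = x ∨ g = z n 0 * x := by
    intro g hgH
    have hsub : ({1, z n 0, x, z n 0 * x} : Set (Cover n 0)) ⊆ (H : Set (Cover n 0)) := by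
      intro g hg
      rcases hg with rfl | rfl | rfl | rfl
      · exact H.one_mem
      · exact hzH
      · exact hxH
      · exact H.mul_mem hzH hxH
    have hne1 : (1 : Cover n 0) ∉ ({z n 0, x, z n 0 * x} : Set (Cover n 0)) := by
      simp only [Set.mem_insert_iff, Set.mem_singleton_iff]
      push_neg
      exact ⟨fun h => hz1 h.symm, fun h => hx1 h.symm, fun h => hd3 h.symm⟩
    have hne2 : z n 0 ∉ ({x, z n 0 * x} : Set (Cover n 0)) := by
      simp only [Set.mem_insert_iff, Set.mem_singleton_iff]
      push_neg
      exact ⟨fun h => hxz h.symm, fun h => hd2 h.symm⟩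
    have hne3 : x ∉ ({z n 0 * x} : Set (Cover n 0)) := by
      simp only [Set.mem_singleton_iff]
      exact fun h => hd1 h.symm
    have hcardS : ({1, z n 0, x, z n 0 * x} : Set (Cover n 0)).ncard = 4 := by
      rw [Set.ncard_insert_of_notMem hne1 (Set.toFinite _),
        Set.ncard_insert_of_notMem hne2 (Set.toFinite _),
        Set.ncard_insert_of_notMem hne3 (Set.toFinite _),
        Set.ncard_singleton]
    have hcardH : (H : Set (Cover n 0)).ncard = 4 := by
      rw [← Nat.card_coe_set_eq]
      exact hcard4
    have hset : ({1, z n 0, x, z n 0 * x} : Set (Cover n 0)) = (H : Set (Cover n 0)) :=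
      Set.eq_of_subset_of_ncard_le hsub (by rw [hcardS, hcardH]) (Set.toFinite _)
    have : g ∈ ({1, z n 0, x, z n 0 * x} : Set (Cover n 0)) := by
      rw [hset]; exact hgH
    simpa using this
  refine ⟨Subgroup.closure {z n 0, x, y}, ?_, ?_⟩
  · refine isElemAbelianTwo_closure _ ?_ ?_
    · rintro a (rfl | rfl | rfl)
      · exact z_sq'
      · exact hx2
      · rw [pow_two]; exact hysq
    · rintro a (rfl | rfl | rfl) b (rfl | rfl | rfl)
      · exact Commute.refl _
      · exact z_central _
      · exact z_central _
      · exact (z_central _).symm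
      · exact Commute.refl _
      · exact hxyc
      · exact (z_central _).symm
      · exact hxyc.symm
      · exact Commute.refl _
  · have hyE : y ∈ Subgroup.closure {z n 0, x, y} :=
      Subgroup.subset_closure (by simp)
    have hyH : y ∉ H := by
      intro hyH
      rcases hHsub y hyH with h | h | h | h
      · exact hpiy1 (by rw [h, map_one])
      · exact hpiy1 (by rw [h, pi_z])
      · exact hpiyx (by rw [h])
      · exact hpiyx (by rw [h, map_mul, pi_z, one_mul])
    have hle : H ≤ Subgroup.closure {z n 0, x, y} := by
      intro g hg
      rcases hHsub g hg with rfl | rfl | rfl | rfl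
      · exact one_mem _
      · exact Subgroup.subset_closure (by simp)
      · exact Subgroup.subset_closure (by simp)
      · exact mul_mem (Subgroup.subset_closure (by simp))
          (Subgroup.subset_closure (by simp))
    exact lt_of_le_of_ne hle (fun h => hyH (h ▸ hyE))

lemma caseB_main {n : ℕ} (hz : orderOf (z n 0) = 2)
    (H : Subgroup (Cover n 0)) (hsq : ∀ g ∈ H, g ^ 2 = 1) (hcard4 : Nat.card H = 4)
    (hzH : z n 0 ∈ H) {x : Cover n 0} (hxH : x ∈ H) (hx1 : x ≠ 1) (hxz : x ≠ z n 0)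
    (r : Cover n 0) {w0 y0 : Cover n 0}
    (hxw0 : r⁻¹ * x * r = w0 ∨ r⁻¹ * x * r = z n 0 * w0)
    (hy0sq : y0 * y0 = 1) (hc0 : w0 * y0 = y0 * w0)
    (hp1 : pi n y0 ≠ 1) (hp2 : pi n y0 ≠ pi n w0) :
    ∃ E : Subgroup (Cover n 0), (∀ g ∈ E, g ^ 2 = 1) ∧ H < E := by
  have hback : r * (r⁻¹ * x * r) * r⁻¹ = x := by group
  apply caseB_finish hz H hsq hcard4 hzH hxH hx1 hxz
    (w := r * w0 * r⁻¹) (y := r * y0 * r⁻¹)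
  · rcases hxw0 with h | h
    · left
      rw [← h]; group
    · right
      rw [h] at hback
      calc x = r * (z n 0 * w0) * r⁻¹ := hback.symm
        _ = (r * z n 0) * w0 * r⁻¹ := by group
        _ = (z n 0 * r) * w0 * r⁻¹ := by rw [z_comm_g']
        _ = z n 0 * (r * w0 * r⁻¹) := by group
  · calc (r * y0 * r⁻¹) * (r * y0 * r⁻¹) = r * (y0 * y0) * r⁻¹ := by group
      _ = 1 := by rw [hy0sq]; group
  · calc (r * w0 * r⁻¹) * (r * y0 * r⁻¹) = r * (w0 * y0) * r⁻¹ := by group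
      _ = r * (y0 * w0) * r⁻¹ := by rw [hc0]
      _ = (r * y0 * r⁻¹) * (r * w0 * r⁻¹) := by group
  · intro h
    apply hp1
    have hy : pi n y0 = (pi n r)⁻¹ * pi n (r * y0 * r⁻¹) * pi n r := by
      rw [map_mul, map_mul, map_inv]; group
    rw [hy, h]; group
  · intro h
    apply hp2
    have hx' : pi n (r⁻¹ * x * r) = pi n w0 := by
      rcases hxw0 with h0 | h0
      · rw [h0]
      · rw [h0, map_mul, pi_z, one_mul]
    have hy : pi n y0 = (pi n r)⁻¹ * pi n (r * y0 * r⁻¹) * pi n r := by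
      rw [map_mul, map_mul, map_inv]; group
    rw [hy, h, ← hx', map_mul, map_mul, map_inv]

end DoubleCover


/-- A subgroup is an elementary abelian 2-subgroup iff every element squares to `1`
(this forces it to be abelian). -/
def IsElemAbelianTwo {G : Type*} [Group G] (E : Subgroup G) : Prop :=
  ∀ x ∈ E, x ^ 2 = 1

open scoped Pointwise

/-- For `10 ≤ n ≤ 15`, the double cover `G = 2^+.S_n` has no maximal
Klein-four subgroups: every Klein-four subgroup of `G` is properly contained in a strictly
larger elementary abelian 2-subgroup of `G`. -/
theorem no_maximal_klein_four_in_two_plus_Sn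
    (n : ℕ) (hn : 10 ≤ n ∧ n ≤ 15)
    (hz : orderOf (DoubleCover.z n 0) = 2)
    (H : Subgroup (DoubleCover.Cover n 0)) (hH : IsKleinFour H) :
    ∃ E : Subgroup (DoubleCover.Cover n 0), IsElemAbelianTwo E ∧ H < E := by
  open DoubleCover in
  obtain ⟨hn10, hn15⟩ := hn
  haveI : Finite (Cover n 0) := (cover_finite_and_card n).1
  have hz1 : z n 0 ≠ 1 := by
    intro h
    rw [h, orderOf_one] at hz
    omega
  have hz2int : z n 0 ^ (2 : ℤ) = 1 := by rw [zpow_two]; exact z_sq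
  have hsq : ∀ g ∈ H, g ^ 2 = 1 := by
    intro g hg
    have h := Monoid.pow_exponent_eq_one (⟨g, hg⟩ : H)
    rw [hH.exponent_two] at h
    simpa using congrArg (Subgroup.subtype H) h
  have hcard4 : Nat.card H = 4 := hH.card_four
  by_cases hzH : z n 0 ∈ H
  · -- z ∈ H : use the structure of lifted involutions
    have hex : ∃ x ∈ H, x ≠ 1 ∧ x ≠ z n 0 := by
      by_contra hcon
      push_neg at hcon
      have hsub : (H : Set (Cover n 0)) ⊆ {1, z n 0} := by
        intro g hg
        rcases eq_or_ne g 1 with h | h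
        · exact Or.inl h
        · exact Or.inr (hcon g hg h)
      have hle : (H : Set (Cover n 0)).ncard ≤ 2 := by
        refine le_trans (Set.ncard_le_ncard hsub (Set.toFinite _)) ?_
        exact le_trans (Set.ncard_insert_le _ _) (by simp)
      have hcardH : (H : Set (Cover n 0)).ncard = 4 := by
        rw [← Nat.card_coe_set_eq]
        exact hcard4
      omega
    obtain ⟨x, hxH, hx1, hxz⟩ := hex
    have hx2 : x ^ 2 = 1 := hsq x hxH
    have hker := ker_pi n hz
    have hσ1 : pi n x ≠ 1 := by
      intro h
      have hxk : x ∈ (pi n).ker := h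
      rw [hker] at hxk
      rcases mem_zpowers_z hxk with h1 | h1
      exacts [hx1 h1, hxz h1]
    have hσ2 : (pi n x) ^ 2 = 1 := by rw [← map_pow, hx2, map_one]
    obtain ⟨k, ρ, hk1, h2k, hρ⟩ := invol_conj hσ1 hσ2
    obtain ⟨r, hr⟩ := pi_surjective ρ
    have hpix' : pi n (r⁻¹ * x * r * (Wo n 0 k)⁻¹) = 1 := by
      rw [map_mul, map_mul, map_mul, map_inv, map_inv, hr, pi_Wo0, ← hρ]
      group
    have hx'mem : r⁻¹ * x * r * (Wo n 0 k)⁻¹ ∈ Subgroup.zpowers (z n 0) := by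
      rw [← hker]; exact hpix'
    have hx' : r⁻¹ * x * r = Wo n 0 k ∨ r⁻¹ * x * r = z n 0 * Wo n 0 k := by
      rcases mem_zpowers_z hx'mem with h | h
      · left; rwa [mul_inv_eq_one] at h
      · right; rwa [mul_inv_eq_iff_eq_mul] at h
    have hW2 : Wo n 0 k * Wo n 0 k = z n 0 ^ k.choose 2 := Wo_sq (by omega)
    have hx'2 : (r⁻¹ * x * r) * (r⁻¹ * x * r) = 1 := by
      have h0 : (r⁻¹ * x * r) * (r⁻¹ * x * r) = r⁻¹ * (x ^ 2) * r := by
        rw [pow_two]; group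
      rw [h0, hx2]; group
    have hW1 : z n 0 ^ (k.choose 2) = 1 := by
      rcases hx' with h | h
      · rw [← hW2, ← h]; exact hx'2
      · rw [← hW2]
        have hthis := hx'2
        rw [h] at hthis
        have hc : Wo n 0 k * z n 0 = z n 0 * Wo n 0 k := z_comm_g' _
        have key : (z n 0 * Wo n 0 k) * (z n 0 * Wo n 0 k) = Wo n 0 k * Wo n 0 k := by
          calc (z n 0 * Wo n 0 k) * (z n 0 * Wo n 0 k)
              = z n 0 * (Wo n 0 k * z n 0) * Wo n 0 k := by group
            _ = z n 0 * (z n 0 * Wo n 0 k) * Wo n 0 k := by rw [hc]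
            _ = (z n 0 * z n 0) * (Wo n 0 k * Wo n 0 k) := by group
            _ = Wo n 0 k * Wo n 0 k := by rw [z_sq, one_mul]
        rw [← key]; exact hthis
    have hdvd : 2 ∣ k.choose 2 := by
      have hd := orderOf_dvd_of_pow_eq_one hW1
      rwa [hz] at hd
    have hk7 : k ≤ 7 := by omega
    interval_cases k
    · -- k = 1 : x is a lift of a transposition
      have hcm : Wo n 2 4 * TT n 0 = z n 0 ^ 4 * (TT n 0 * Wo n 2 4) :=
        Wo_comm (by omega) (by omega) (fun i hi => by simp [Nat.dist]; omega)
      have e1 : Wo n 0 1 = TT n 0 := by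
        have h := Wo_succ (n := n) 0 0
        simpa [Wo_zero] using h
      apply caseB_main hz H hsq hcard4 hzH hxH hx1 hxz r (y0 := Wo n 2 4) hx'
      · rw [Wo_sq (by omega : 2 + 2*4 ≤ n), show Nat.choose 4 2 = 2*3 from rfl]
        exact z_pow_mul2 3
      · rw [e1, hcm, show (4 : ℕ) = 2*2 from rfl, z_pow_mul2, one_mul]
      · intro h
        have h1 := pi_Wo_apply (n := n) (c := 2) (k := 4) (i := 0) (by omega) (by omega)
        rw [h] at h1
        simp [Fin.ext_iff] at h1
      · intro h
        have h1 := pi_Wo_apply (n := n) (c := 2) (k := 4) (i := 0) (by omega) (by omega)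
        have h2 := pi_Wo_fix (n := n) (c := 0) (k := 1)
          (⟨2 + 2*0, by omega⟩ : Fin n) (by show 0 + 2*1 ≤ 2 + 2*0; omega)
        rw [h, h2] at h1
        simp [Fin.ext_iff] at h1
    · exact absurd hdvd (by decide)
    · exact absurd hdvd (by decide)
    · -- k = 4
      have e8 : Wo n 8 1 = TT n 8 := by
        have h := Wo_succ (n := n) 8 0
        simpa [Wo_zero] using h
      have hcm : Wo n 0 4 * TT n 8 = z n 0 ^ 4 * (TT n 8 * Wo n 0 4) :=
        Wo_comm (by omega) (by omega) (fun i hi => by simp [Nat.dist]; omega)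
      apply caseB_main hz H hsq hcard4 hzH hxH hx1 hxz r (y0 := Wo n 8 1) hx'
      · rw [Wo_sq (by omega : 8 + 2*1 ≤ n)]
        simp
      · rw [e8, hcm, show (4 : ℕ) = 2*2 from rfl, z_pow_mul2, one_mul]
      · intro h
        have h1 := pi_Wo_apply (n := n) (c := 8) (k := 1) (i := 0) (by omega) (by omega)
        rw [h] at h1
        simp [Fin.ext_iff] at h1
      · intro h
        have h1 := pi_Wo_apply (n := n) (c := 8) (k := 1) (i := 0) (by omega) (by omega)
        have h2 := pi_Wo_fix (n := n) (c := 0) (k := 4)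
          (⟨8 + 2*0, by omega⟩ : Fin n) (by show 0 + 2*4 ≤ 8 + 2*0; omega)
        rw [h, h2] at h1
        simp [Fin.ext_iff] at h1
    · -- k = 5
      have hsplit : Wo n 0 5 = Wo n 0 1 * Wo n 2 4 := by
        have h := Wo_split (n := n) 0 1 4
        norm_num at h
        exact h
      have e1 : Wo n 0 1 = TT n 0 := by
        have h := Wo_succ (n := n) 0 0
        simpa [Wo_zero] using h
      have hcm : Wo n 2 4 * TT n 0 = z n 0 ^ 4 * (TT n 0 * Wo n 2 4) :=
        Wo_comm (by omega) (by omega) (fun i hi => by simp [Nat.dist]; omega)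
      have hrhs : Wo n 0 1 * Wo n 0 5 = Wo n 2 4 := by
        rw [hsplit, e1, ← mul_assoc, TT_sq, one_mul]
      apply caseB_main hz H hsq hcard4 hzH hxH hx1 hxz r (y0 := Wo n 0 1) hx'
      · rw [Wo_sq (by omega : 0 + 2*1 ≤ n)]
        simp
      · calc Wo n 0 5 * Wo n 0 1 = TT n 0 * (Wo n 2 4 * TT n 0) := by
              rw [hsplit, e1]; group
          _ = TT n 0 * (z n 0 ^ 4 * (TT n 0 * Wo n 2 4)) := by rw [hcm]
          _ = z n 0 ^ 4 * ((TT n 0 * TT n 0) * Wo n 2 4) := by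
              rw [← mul_assoc (TT n 0) (z n 0 ^ 4), (zpow_central 4 (TT n 0)).symm.eq]
              group
          _ = Wo n 2 4 := by
              rw [TT_sq, show (4 : ℕ) = 2*2 from rfl, z_pow_mul2, one_mul, one_mul]
          _ = Wo n 0 1 * Wo n 0 5 := hrhs.symm
      · intro h
        have h1 := pi_Wo_apply (n := n) (c := 0) (k := 1) (i := 0) (by omega) (by omega)
        rw [h] at h1
        simp [Fin.ext_iff] at h1
      · intro h
        have h1 := pi_Wo_apply (n := n) (c := 0) (k := 5) (i := 1) (by omega) (by omega)
        have h2 := pi_Wo_fix (n := n) (c := 0) (k := 1)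
          (⟨0 + 2*1, by omega⟩ : Fin n) (by show 0 + 2*1 ≤ 0 + 2*1; omega)
        rw [← h, h2] at h1
        simp [Fin.ext_iff] at h1
    · exact absurd hdvd (by decide)
    · exact absurd hdvd (by decide)
  · -- z ∉ H : adjoin z
    haveI hnorm : (Subgroup.zpowers (z n 0)).Normal := by
      constructor
      intro a ha g
      obtain ⟨m, rfl⟩ := ha
      have hc : (z n 0) ^ m * g = g * (z n 0) ^ m := ((z_central g).zpow_left m).eq
      have : g * (z n 0) ^ m * g⁻¹ = (z n 0) ^ m := by
        rw [← hc]; group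
      rw [this]
      exact ⟨m, rfl⟩
    refine ⟨H ⊔ Subgroup.zpowers (z n 0), ?_, ?_⟩
    · intro g hg
      have hg' : g ∈ ((H : Set (Cover n 0)) * (Subgroup.zpowers (z n 0) : Set (Cover n 0))) := by
        rw [← Subgroup.mul_normal]; exact hg
      obtain ⟨a, ha, b, hb, rfl⟩ := hg'
      obtain ⟨m, rfl⟩ := hb
      have hc : Commute a ((z n 0) ^ m) := ((z_central a).zpow_left m).symm
      rw [hc.mul_pow, hsq a ha, one_mul]
      rw [pow_two, ← zpow_add, show m + m = 2 * m by ring, zpow_mul, hz2int, one_zpow]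
    · have hzE : z n 0 ∈ H ⊔ Subgroup.zpowers (z n 0) :=
        (le_sup_right : Subgroup.zpowers (z n 0) ≤ _) (Subgroup.mem_zpowers _)
      refine lt_of_le_of_ne le_sup_left (fun h => hzH ?_)
      rw [h]
      exact hzE
end

section
/- Let n ≥ 4 and let G = 2.A_n be the double cover of the alternating group A_n, with central element z of order 2 and projection π : G → A_n. An element x ∈ G with x ∉ {1, z} is an involution if and only if π(x) is an l-fold transposition for some l with l ≡ 0 (mod 4). -/
namespace DCAux
open DoubleCover

variable {n α : ℕ}

lemma rel_one {r : FreeGroup (Gen n)} (hr : r ∈ rels n α) :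
    PresentedGroup.mk (rels n α) r = 1 :=
  (QuotientGroup.eq_one_iff r).mpr (Subgroup.subset_normalClosure hr)

lemma mk_zw : PresentedGroup.mk (rels n α) (zw n) = z n α := rfl
lemma mk_tw (j : Fin (n - 1)) : PresentedGroup.mk (rels n α) (tw n j) = t n α j := rfl

lemma t_sq (j : Fin (n - 1)) : t n α j ^ 2 = z n α ^ α := by
  have h := rel_one (n := n) (α := α) (Or.inr (Or.inl ⟨j, rfl⟩))
  simp only [map_mul, map_pow, map_inv, mul_inv_eq_one, mk_zw, mk_tw] at h
  exact h

lemma z_comm_t (j : Fin (n - 1)) : z n α * t n α j = t n α j * z n α := by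
  have h := rel_one (n := n) (α := α) (Or.inr (Or.inr (Or.inr (Or.inl ⟨j, rfl⟩))))
  simp only [map_mul, map_inv, mk_zw, mk_tw, mul_inv_eq_one] at h
  have := congrArg (· * z n α) h
  simpa [mul_assoc] using this

lemma t_comm {j k : Fin (n - 1)} (h : 1 < Nat.dist (j : ℕ) (k : ℕ)) :
    t n α j * t n α k = z n α * t n α k * t n α j := by
  have h2 := rel_one (n := n) (α := α) (Or.inr (Or.inr (Or.inr (Or.inr ⟨j, k, h, rfl⟩))))
  simp only [map_mul, map_inv, mk_zw, mk_tw, mul_inv_eq_one] at h2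
  rw [h2]


/-- `tt m` is `t_{2m}` (a lift of the swap `(2m, 2m+1)`, 0-indexed), or `1` if out of range. -/
def tt (n α m : ℕ) : Cover n α := if h : 2 * m < n - 1 then t n α ⟨2 * m, h⟩ else 1

/-- `X l` is the standard lift of the product of the `l` disjoint swaps `(2i, 2i+1)`. -/
def X (n α l : ℕ) : Cover n α := ((List.range l).map (tt n α)).prod

lemma X_zero : X n α 0 = 1 := rfl

lemma X_succ (k : ℕ) : X n α (k + 1) = X n α k * tt n α k := by
  rw [X, List.range_succ, List.map_append, List.prod_append]; simp [X]

/-- exponent of `z` in `(X l)^2`. -/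
def ee (α : ℕ) : ℕ → ℕ
  | 0 => 0
  | l + 1 => ee α l + l + α

lemma two_ee (l : ℕ) : 2 * ee α l = 2 * α * l + l * (l - 1) := by
  induction l with
  | zero => simp [ee]
  | succ k ih =>
    show 2 * (ee α k + k + α) = _
    rw [Nat.mul_add, Nat.mul_add, ih]
    cases k with
    | zero => ring
    | succ m =>
      have h1 : (m + 1) * (m + 1 - 1) = (m + 1) * m := rfl
      have h2 : (m + 1 + 1) * (m + 1 + 1 - 1) = (m + 2) * (m + 1) := rfl
      rw [h1, h2]; ring

lemma z_comm_tt (m : ℕ) : z n α * tt n α m = tt n α m * z n α := by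
  rw [tt]; split_ifs with h
  · exact z_comm_t _
  · simp

lemma z_comm_X (l : ℕ) : z n α * X n α l = X n α l * z n α := by
  induction l with
  | zero => simp [X]
  | succ k ih =>
    rw [X_succ, ← mul_assoc, ih, mul_assoc, z_comm_tt, mul_assoc]

lemma zpow_comm_of_comm {w : Cover n α} (hw : z n α * w = w * z n α) (k : ℕ) :
    z n α ^ k * w = w * z n α ^ k := by
  induction k with
  | zero => simp
  | succ r ihr => rw [pow_succ, mul_assoc, hw, ← mul_assoc, ihr, mul_assoc]

lemma tt_comm {m M : ℕ} (h : m < M) (hM : 2 * M < n - 1) :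
    tt n α M * tt n α m = z n α * tt n α m * tt n α M := by
  have hm : 2 * m < n - 1 := by omega
  rw [tt, tt, dif_pos hm, dif_pos hM]
  exact t_comm (by simp [Nat.dist]; omega)

lemma tt_X_comm {M : ℕ} (hM : 2 * M < n - 1) :
    ∀ m ≤ M, tt n α M * X n α m = z n α ^ m * X n α m * tt n α M := by
  intro m hm
  induction m with
  | zero => simp [X]
  | succ k ih =>
    have hk : k ≤ M := by omega
    calc tt n α M * X n α (k + 1)
        = (tt n α M * X n α k) * tt n α k := by
          rw [X_succ, mul_assoc]
      _ = z n α ^ k * X n α k * (tt n α M * tt n α k) := by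
          rw [ih hk]; group
      _ = z n α ^ k * X n α k * (z n α * tt n α k * tt n α M) := by
          rw [tt_comm (by omega) hM]
      _ = z n α ^ (k + 1) * X n α (k + 1) * tt n α M := by
          rw [pow_succ, X_succ]
          have h1 : X n α k * z n α = z n α * X n α k := (z_comm_X k).symm
          calc z n α ^ k * X n α k * (z n α * tt n α k * tt n α M)
              = z n α ^ k * (X n α k * z n α) * (tt n α k * tt n α M) := by group
            _ = z n α ^ k * (z n α * X n α k) * (tt n α k * tt n α M) := by rw [h1]
            _ = z n α ^ k * z n α * (X n α k * tt n α k) * tt n α M := by group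
            _ = _ := rfl

lemma tt_sq {m : ℕ} (hm : 2 * m < n - 1) : tt n α m ^ 2 = z n α ^ α := by
  rw [tt, dif_pos hm]; exact t_sq _

lemma X_sq : ∀ l : ℕ, 2 * l ≤ n → X n α l ^ 2 = z n α ^ ee α l := by
  intro l
  induction l with
  | zero => simp [X, ee]
  | succ k ih =>
    intro hl
    have hk2 : 2 * k < n - 1 := by omega
    have hXk := ih (by omega)
    calc X n α (k + 1) ^ 2
        = X n α k * (tt n α k * X n α k) * tt n α k := by
          rw [X_succ, sq]; group
      _ = X n α k * (z n α ^ k * X n α k * tt n α k) * tt n α k := by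
          rw [tt_X_comm hk2 k le_rfl]
      _ = z n α ^ k * (X n α k ^ 2) * (tt n α k ^ 2) := by
          have h1 := zpow_comm_of_comm (n:=n) (α:=α) (z_comm_X k) k
          calc X n α k * (z n α ^ k * X n α k * tt n α k) * tt n α k
              = (X n α k * z n α ^ k) * (X n α k * (tt n α k * tt n α k)) := by group
            _ = (z n α ^ k * X n α k) * (X n α k * (tt n α k * tt n α k)) := by rw [← h1]
            _ = _ := by rw [sq, sq]; group
      _ = z n α ^ ee α (k + 1) := by
          rw [hXk, tt_sq hk2, show ee α (k+1) = k + ee α k + α from by rw [ee]; ring,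
            pow_add, pow_add]


open Equiv Equiv.Perm in
/-- the swap `(2m, 2m+1)` (0-indexed), or `1` if out of range. -/
def sw (n m : ℕ) : Perm (Fin n) :=
  if h : 2 * m < n - 1 then Equiv.swap ⟨2 * m, by omega⟩ ⟨2 * m + 1, by omega⟩ else 1

def P (n l : ℕ) : Equiv.Perm (Fin n) := ((List.range l).map (sw n)).prod

lemma P_zero : P n 0 = 1 := rfl

lemma P_succ (k : ℕ) : P n (k + 1) = P n k * sw n k := by
  rw [P, List.range_succ, List.map_append, List.prod_append]; simp [P]

lemma sw_fix {m : ℕ} {x : Fin n} (h1 : x.val ≠ 2 * m) (h2 : x.val ≠ 2 * m + 1) :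
    sw n m x = x := by
  rw [sw]; split_ifs with h
  · exact Equiv.swap_apply_of_ne_of_ne (Fin.ne_of_val_ne h1) (Fin.ne_of_val_ne h2)
  · rfl

lemma P_fix : ∀ l : ℕ, ∀ x : Fin n, 2 * l ≤ x.val → P n l x = x := by
  intro l
  induction l with
  | zero => intro x _; rw [P_zero]; rfl
  | succ k ih =>
    intro x hx
    rw [P_succ, Equiv.Perm.mul_apply, sw_fix (by omega) (by omega)]
    exact ih x (by omega)

lemma P_sw_disjoint (l : ℕ) : Equiv.Perm.Disjoint (P n l) (sw n l) := by
  intro x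
  by_cases h : 2 * l ≤ x.val
  · exact Or.inl (P_fix l x h)
  · exact Or.inr (sw_fix (by omega) (by omega))

lemma cycleType_sw {m : ℕ} (hm : 2 * m < n - 1) :
    (sw n m).cycleType = {2} := by
  rw [sw, dif_pos hm]
  have hne : (⟨2 * m, by omega⟩ : Fin n) ≠ ⟨2 * m + 1, by omega⟩ := by
    simp [Fin.ext_iff]
  rw [(Equiv.Perm.isCycle_swap hne).cycleType, Equiv.Perm.card_support_swap hne]

lemma cycleType_P : ∀ l : ℕ, 2 * l ≤ n → (P n l).cycleType = Multiset.replicate l 2 := by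
  intro l
  induction l with
  | zero => intro _; rw [P_zero]; simp
  | succ k ih =>
    intro hl
    rw [P_succ, Equiv.Perm.Disjoint.cycleType_mul (P_sw_disjoint k), ih (by omega), cycleType_sw (by omega),
      add_comm, Multiset.singleton_add, ← Multiset.replicate_succ]

section Hom

variable (π : Cover n α →* Equiv.Perm (Fin n)) (hn : 4 ≤ n)
variable (hπt : ∀ j : Fin (n - 1), π (DoubleCover.t n α j) =
      Equiv.swap (Fin.castLE (Nat.sub_le n 1) j)
        (Fin.castLE (Nat.sub_add_cancel (le_trans (by norm_num) hn)).le j.succ))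

include hπt in
lemma π_tt (m : ℕ) : π (tt n α m) = sw n m := by
  rw [tt, sw]
  split_ifs with h
  · rw [hπt]
    congr 1 <;> apply Fin.ext <;> simp
  · exact map_one π

include hπt in
lemma π_X (l : ℕ) : π (X n α l) = P n l := by
  induction l with
  | zero => rw [X_zero, P_zero, map_one]
  | succ k ih => rw [X_succ, P_succ, map_mul, ih, π_tt π hn hπt]

variable (hπker : π.ker = Subgroup.zpowers (z n α)) (hz : orderOf (z n α) = 2)

include hz in
lemma z_sq_one : z n α ^ 2 = 1 := by rw [← hz]; exact pow_orderOf_eq_one _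

include hz in
lemma z_ne_one : z n α ≠ 1 := by
  intro h
  rw [h, orderOf_one] at hz
  omega

include hz in
lemma zpow_cases (k : ℤ) : z n α ^ k = 1 ∨ z n α ^ k = z n α := by
  have h2 : z n α ^ (2 : ℤ) = 1 := by
    rw [show (2 : ℤ) = ((2 : ℕ) : ℤ) from rfl, zpow_natCast, z_sq_one hz]
  obtain ⟨m, hm | hm⟩ := Int.even_or_odd' k
  · left; rw [hm, zpow_mul, h2, one_zpow]
  · right; rw [hm, zpow_add, zpow_mul, h2, one_zpow, one_mul, zpow_one]

include hπker hz in
lemma ker_cases {y : Cover n α} (hy : y ∈ π.ker) : y = 1 ∨ y = z n α := by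
  rw [hπker] at hy
  obtain ⟨k, hk⟩ := Subgroup.mem_zpowers_iff.mp hy
  rcases zpow_cases hz k with h | h
  · left; rw [← hk, h]
  · right; rw [← hk, h]

include hπker hz in
lemma π_z : π (z n α) = 1 := by
  have : z n α ∈ π.ker := hπker ▸ Subgroup.mem_zpowers _
  exact this

include hπker hz in
lemma z_central (g : Cover n α) : g * z n α = z n α * g := by
  have hmem : g * z n α * g⁻¹ ∈ π.ker := by
    simp [MonoidHom.mem_ker, π_z π hπker hz]
  rcases ker_cases π hπker hz hmem with h | h
  · exfalso
    apply z_ne_one hz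
    have : z n α = g⁻¹ * (g * z n α * g⁻¹) * g := by group
    rw [this, h]; group
  · have := congrArg (· * g) h
    simpa [mul_assoc] using this

variable (hπsurj : Function.Surjective π)

include hn hπt hπker hz hπsurj in
lemma square_eq {x : Cover n α} {l : ℕ}
    (hct : (π x).cycleType = Multiset.replicate l 2) (hl : 2 * l ≤ n) :
    x ^ 2 = z n α ^ ee α l := by
  have hconj : IsConj (π (X n α l)) (π x) := by
    rw [Equiv.Perm.isConj_iff_cycleType_eq, π_X π hn hπt, cycleType_P l hl, hct]
  obtain ⟨c, hc⟩ := isConj_iff.mp hconj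
  obtain ⟨g, rfl⟩ := hπsurj c
  set y := g * X n α l * g⁻¹ with hy
  have hπy : π y = π x := by
    rw [hy, map_mul, map_mul, map_inv, hc]
  have hker : x * y⁻¹ ∈ π.ker := by
    simp [MonoidHom.mem_ker, hπy]
  have hy2 : y ^ 2 = z n α ^ ee α l := by
    have hXsq := X_sq (n := n) (α := α) l hl
    have hcomm : z n α ^ ee α l * g = g * z n α ^ ee α l :=
      zpow_comm_of_comm (z_central π hπker hz g).symm _
    calc y ^ 2 = g * X n α l ^ 2 * g⁻¹ := by rw [hy, sq, sq]; group
      _ = g * z n α ^ ee α l * g⁻¹ := by rw [hXsq]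
      _ = z n α ^ ee α l * (g * g⁻¹) := by rw [← hcomm]; group
      _ = z n α ^ ee α l := by group
  rcases ker_cases π hπker hz hker with h | h
  · have hxy : x = y := by
      have := congrArg (· * y) h
      simpa [mul_assoc] using this
    rw [hxy, hy2]
  · have hxy : x = z n α * y := by
      have := congrArg (· * y) h
      simpa [mul_assoc] using this
    have hyz : y * z n α = z n α * y := z_central π hπker hz y
    calc x ^ 2 = z n α * (y * z n α) * y := by rw [hxy, sq]; group
      _ = z n α ^ 2 * y ^ 2 := by rw [hyz, sq, sq]; group
      _ = z n α ^ ee α l := by rw [z_sq_one hz, one_mul, hy2]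

end Hom

lemma ee_even_of_mod4 {l : ℕ} (h : l % 4 = 0) : 2 ∣ ee α l := by
  obtain ⟨r, rfl⟩ : ∃ r, l = 4 * r := ⟨l / 4, by omega⟩
  rcases Nat.eq_zero_or_pos r with rfl | hr
  · simp [ee]
  have h2 := two_ee (α := α) (4 * r)
  obtain ⟨q, hq⟩ : ∃ q, 4 * r = q + 1 := ⟨4 * r - 1, by omega⟩
  have e1 : 4 * r * (4 * r - 1) = 4 * (r * q) := by
    rw [show 4 * r - 1 = q from by omega]; ring
  have e2 : 2 * α * (4 * r) = 8 * (α * r) := by ring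
  rw [e1, e2] at h2
  set E := ee α (4 * r)
  set A := α * r
  set B := r * q
  omega

lemma mod4_of_ee_even {l : ℕ} (hl : 0 < l) (hlev : 2 ∣ l) (h : 2 ∣ ee α l) :
    l % 4 = 0 := by
  obtain ⟨m, rfl⟩ := hlev
  have hm : 1 ≤ m := by omega
  have h2 := two_ee (α := α) (2 * m)
  obtain ⟨q, hq⟩ : ∃ q, 2 * m = q + 1 := ⟨2 * m - 1, by omega⟩
  have e1 : 2 * m * (2 * m - 1) = 2 * (m * q) := by
    rw [show 2 * m - 1 = q from by omega]; ring
  have e2 : 2 * α * (2 * m) = 4 * (α * m) := by ring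
  rw [e1, e2] at h2
  have hqodd : ¬ 2 ∣ q := by omega
  have hmq : 2 ∣ m * q := by
    set E := ee α (2 * m)
    set A := α * m
    set B := m * q
    omega
  rcases (Nat.prime_two.dvd_mul.mp hmq) with hh | hh
  · omega
  · exact absurd hh hqodd

end DCAux

/-- For `n ≥ 4` and `G = 2.A_n = π⁻¹(A_n)` with central element `z` of
order 2: a noncentral element `x` of `G` is an involution if and only if `π x` is an
`l`-fold transposition (i.e. has cycle type `(2^l, 1^{n-2l})`) for some positive `l` with
`l ≡ 0 (mod 4)`. -/
theorem involution_iff_lfold_transposition_in_two_An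
    (n : ℕ) (hn : 4 ≤ n) (α : ℕ) (hα : α = 0 ∨ α = 1)
    (π : DoubleCover.Cover n α →* Equiv.Perm (Fin n))
    (hπt : ∀ j : Fin (n - 1), π (DoubleCover.t n α j) =
      Equiv.swap (Fin.castLE (by omega) j) (Fin.castLE (by omega) j.succ))
    (hπsurj : Function.Surjective π)
    (hπker : π.ker = Subgroup.zpowers (DoubleCover.z n α))
    (hz : orderOf (DoubleCover.z n α) = 2)
    (x : DoubleCover.Cover n α)
    (hxA : x ∈ Subgroup.comap π (alternatingGroup (Fin n)))
    (hx1 : x ≠ 1) (hxz : x ≠ DoubleCover.z n α) :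
    x ^ 2 = 1 ↔
      ∃ l : ℕ, 0 < l ∧ l % 4 = 0 ∧ (π x).cycleType = Multiset.replicate l 2 := by
  have hz2 : DoubleCover.z n α ^ 2 = 1 := DCAux.z_sq_one hz
  have hsupp : (π x).support.card ≤ n := by
    simpa using Finset.card_le_univ (π x).support
  constructor
  · intro hx2
    have hπx1 : π x ≠ 1 := by
      intro h
      rcases DCAux.ker_cases π hπker hz (MonoidHom.mem_ker.mpr h) with h1 | h1
      · exact hx1 h1
      · exact hxz h1
    have hπx2 : (π x) ^ 2 = 1 := by rw [← map_pow, hx2, map_one]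
    set l := (π x).cycleType.card with hldef
    have hct : (π x).cycleType = Multiset.replicate l 2 := by
      apply Multiset.eq_replicate_card.mpr
      intro b hb
      have hb2 : 2 ≤ b := Equiv.Perm.two_le_of_mem_cycleType hb
      have hdvd : b ∣ 2 := by
        have h1 : b ∣ (π x).cycleType.lcm := Multiset.dvd_lcm hb
        rw [Equiv.Perm.lcm_cycleType] at h1
        exact h1.trans (orderOf_dvd_of_pow_eq_one hπx2)
      have := Nat.le_of_dvd (by norm_num) hdvd
      omega
    have hl0 : 0 < l := by
      rcases Nat.eq_zero_or_pos l with h0 | h0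
      · rw [h0, Multiset.replicate_zero, Equiv.Perm.cycleType_eq_zero] at hct
        exact absurd hct hπx1
      · exact h0
    have hln : 2 * l ≤ n := by
      have hsum := Equiv.Perm.sum_cycleType (π x)
      rw [hct, Multiset.sum_replicate, smul_eq_mul] at hsum
      omega
    have hsq := DCAux.square_eq π hn hπt hπker hz hπsurj hct hln
    have hee : 2 ∣ DCAux.ee α l := by
      rw [hx2] at hsq
      have := orderOf_dvd_of_pow_eq_one hsq.symm
      rwa [hz] at this
    have hlev : 2 ∣ l := by
      have hsgn : Equiv.Perm.sign (π x) = 1 :=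
        Equiv.Perm.mem_alternatingGroup.mp (Subgroup.mem_comap.mp hxA)
      rw [Equiv.Perm.sign_of_cycleType, hct, Multiset.sum_replicate,
        Multiset.card_replicate, smul_eq_mul] at hsgn
      by_contra hodd
      have hO : Odd (l * 2 + l) := by rw [Nat.odd_iff]; omega
      rw [Odd.neg_one_pow hO] at hsgn
      exact absurd hsgn (by decide)
    exact ⟨l, hl0, DCAux.mod4_of_ee_even hl0 hlev hee, hct⟩
  · rintro ⟨l, hl0, hl4, hct⟩
    have hln : 2 * l ≤ n := by
      have hsum := Equiv.Perm.sum_cycleType (π x)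
      rw [hct, Multiset.sum_replicate, smul_eq_mul] at hsum
      omega
    have hsq := DCAux.square_eq π hn hπt hπker hz hπsurj hct hln
    obtain ⟨s, hs⟩ := DCAux.ee_even_of_mod4 (α := α) hl4
    rw [hsq, hs, pow_mul, hz2, one_pow]
end
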